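/- For every ξ ∈ (0,1) and every s > 0, one has Σₙ₌₁^∞ n e^{−n²π²s} sin(nπξ) > 0. -/

import Mathlib

set_option maxHeartbeats 1000000

open Real Set

-- |sin (m y)| ≤ m |sin y|
lemma aux_sin_nat_mul_le (y : ℝ) : ∀ m : ℕ, |Real.sin (m * y)| ≤ m * |Real.sin y| := by
  intro m
  induction m with
  | zero => simp
  | succ n ih =>
    have h1 : ((n + 1 : ℕ) : ℝ) * y = (n : ℝ) * y + y := by push_cast; ring
    rw [h1, Real.sin_add]
    calc |Real.sin ((n:ℝ)*y) * Real.cos y + Real.cos ((n:ℝ)*y) * Real.sin y|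
        ≤ |Real.sin ((n:ℝ)*y) * Real.cos y| + |Real.cos ((n:ℝ)*y) * Real.sin y| := abs_add_le _ _
      _ ≤ |Real.sin ((n:ℝ)*y)| * 1 + 1 * |Real.sin y| := by
          rw [abs_mul, abs_mul]
          exact add_le_add
            (mul_le_mul_of_nonneg_left (Real.abs_cos_le_one y) (abs_nonneg _))
            (mul_le_mul_of_nonneg_right (Real.abs_cos_le_one _) (abs_nonneg _))
      _ ≤ (n : ℝ) * |Real.sin y| + 1 * |Real.sin y| := by
          exact add_le_add (by rw [mul_one]; exact ih) le_rfl
      _ = ((n + 1 : ℕ) : ℝ) * |Real.sin y| := by push_cast; ring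

-- derivative of g u = u * exp (-π u² x)
lemma aux_hasDerivAt (x u : ℝ) :
    HasDerivAt (fun u : ℝ => u * Real.exp (-π * u^2 * x))
      ((1 - 2*π*x*u^2) * Real.exp (-π * u^2 * x)) u := by
  have h1 : HasDerivAt (fun u : ℝ => -π * u^2 * x) (-π * (2*u) * x) u := by
    simpa using (((hasDerivAt_pow 2 u).const_mul (-π)).mul_const x)
  have h2 := h1.exp
  have h3 := (hasDerivAt_id u).fun_mul h2
  convert h3 using 1
  try simp only [id]
  all_goals first | rfl | (simp only [id_eq]; ring)

lemma aux_strictAntiOn (x a : ℝ) (ha : 0 < a) (hx : 0 < x) (h1 : 1 ≤ 2*π*x*a^2) :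
    StrictAntiOn (fun u : ℝ => u * Real.exp (-π * u^2 * x)) (Ici a) := by
  apply strictAntiOn_of_deriv_neg (convex_Ici a)
  · exact (continuous_id.mul (((continuous_const.mul (continuous_pow 2)).mul
      continuous_const).rexp)).continuousOn
  · intro u hu
    rw [interior_Ici] at hu
    rw [(aux_hasDerivAt x u).deriv]
    have hπ := Real.pi_pos
    have hu2 : a^2 < u^2 := by nlinarith [mem_Ioi.mp hu]
    have : (1:ℝ) < 2*π*x*u^2 := by nlinarith
    nlinarith [Real.exp_pos (-π * u^2 * x)]

lemma aux_oddKernel_pos (a x : ℝ) (ha : 0 < a) (ha' : a < 1/2) (hx8 : 8 ≤ π * x) :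
    0 < HurwitzZeta.oddKernel (↑a) x := by
  have hπ := Real.pi_pos
  have hx : 0 < x := by nlinarith
  set g : ℝ → ℝ := fun u => u * Real.exp (-π * u^2 * x) with hg
  have hgodd : ∀ u : ℝ, g (-u) = - g u := by
    intro u; simp only [hg, neg_sq]; ring
  have h : HasSum (fun n : ℤ => g ((n:ℝ) + a)) (HurwitzZeta.oddKernel (↑a) x) :=
    HurwitzZeta.hasSum_int_oddKernel a hx
  set K := HurwitzZeta.oddKernel (↑a) x with hK
  rcases le_or_gt 1 (2*π*x*a^2) with hc | hc
  · -- pairing around half-integers; every pair is positive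
    have hanti := aux_strictAntiOn x a ha hx hc
    have h3 : HasSum (fun n : ℕ => g ((n:ℝ) + a) - g ((n:ℝ) + 1 - a)) K := by
      apply h.nat_add_neg_add_one.congr_fun
      intro n
      have e1 : (((-((n:ℤ)+1)) : ℤ) : ℝ) + a = -(((n:ℝ) + 1 - a)) := by push_cast; ring
      have e2 : ((((n:ℕ)):ℤ):ℝ) + a = (n:ℝ) + a := by push_cast; ring
      rw [e1, e2, hgodd, sub_eq_add_neg]
    have hpos : ∀ n : ℕ, 0 < g ((n:ℝ) + a) - g ((n:ℝ) + 1 - a) := by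
      intro n
      have hn0 : (0:ℝ) ≤ (n:ℝ) := Nat.cast_nonneg n
      have hmem1 : ((n:ℝ) + a) ∈ Ici a := by simp only [mem_Ici]; linarith
      have hmem2 : ((n:ℝ) + 1 - a) ∈ Ici a := by simp only [mem_Ici]; linarith
      have hlt : (n:ℝ) + a < (n:ℝ) + 1 - a := by linarith
      exact sub_pos.mpr (hanti hmem1 hmem2 hlt)
    have h0 := hpos 0
    have hle := le_hasSum h3 0 (fun i _ => (hpos i).le)
    linarith
  · -- small a: the n = 0 term dominates
    set β := π * x with hβ
    have hβ8 : (8:ℝ) ≤ β := hx8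
    have ha4 : a ≤ 1/4 := by nlinarith
    set C := 4 * β * a * Real.exp (-(9/16) * β) with hC
    set ρ := 4 * Real.exp (-13) with hρ
    have hexp1 : (2:ℝ) ≤ Real.exp 1 := by
      have := Real.exp_one_gt_d9; linarith
    have hρpos : 0 < ρ := by positivity
    have hρsmall : ρ ≤ 1/2048 := by
      have h213 : (8192:ℝ) ≤ Real.exp 13 := by
        calc (8192:ℝ) = 2^13 := by norm_num
          _ ≤ (Real.exp 1)^13 := by
              exact pow_le_pow_left₀ (by norm_num) hexp1 13
          _ = Real.exp 13 := by
              rw [← Real.exp_nat_mul]; norm_num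
      have h2 : Real.exp (-13) ≤ 1/8192 := by
        rw [Real.exp_neg]
        have h3 : (0:ℝ) < Real.exp 13 := Real.exp_pos _
        rw [inv_le_comm₀ h3 (by norm_num)]
        linarith
      rw [hρ]; linarith
    have hρlt1 : ρ < 1 := by linarith
    -- pair n with -n
    have h3 : HasSum (fun n : ℕ => g ((n:ℝ) + a) - g ((n:ℝ) - a)) (K + g a) := by
      have h4 := h.nat_add_neg
      have e0 : g (((0:ℤ):ℝ) + a) = g a := by norm_num
      rw [e0] at h4
      apply h4.congr_fun
      intro n
      have e1 : (((-(n:ℤ)) : ℤ) : ℝ) + a = -(((n:ℝ) - a)) := by push_cast; ring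
      have e2 : ((((n:ℕ)):ℤ):ℝ) + a = (n:ℝ) + a := by push_cast; ring
      rw [e1, e2, hgodd, sub_eq_add_neg]
    -- the tail bound
    have htail : ∀ n : ℕ, -(C * ρ^n) ≤ g (((n:ℕ):ℝ) + 1 + a) - g (((n:ℕ):ℝ) + 1 - a) := by
      intro n
      set m : ℝ := (n:ℝ) + 1 with hm
      have hn0 : (0:ℝ) ≤ (n:ℝ) := Nat.cast_nonneg n
      have hm1 : (1:ℝ) ≤ m := by rw [hm]; linarith
      have hA : Real.exp (-π * (m+a)^2 * x) =
          Real.exp (-π * (m-a)^2 * x) * Real.exp (-(4*β*a*m)) := by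
        rw [← Real.exp_add]; congr 1; rw [hβ]; ring
      have hE1 : Real.exp (-(4*β*a*m)) ≤ 1 := by
        apply Real.exp_le_one_iff.mpr
        nlinarith [mul_pos (mul_pos (show (0:ℝ) < β by linarith) ha)
          (show (0:ℝ) < m by linarith)]
      have hE2 : 1 - Real.exp (-(4*β*a*m)) ≤ 4*β*a*m := by
        nlinarith [Real.add_one_le_exp (-(4*β*a*m))]
      have hgm : g (m - a) - g (m + a) ≤ 4*β*a*m^2 * Real.exp (-π * (m-a)^2 * x) := by
        simp only [hg]
        rw [hA]
        have hApos : (0:ℝ) < Real.exp (-π * (m-a)^2 * x) := Real.exp_pos _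
        have hEpos : (0:ℝ) < Real.exp (-(4*β*a*m)) := Real.exp_pos _
        set A := Real.exp (-π * (m-a)^2 * x)
        set E := Real.exp (-(4*β*a*m))
        calc (m - a) * A - (m + a) * (A * E) = A * (m * (1 - E) - a * (1 + E)) := by ring
          _ ≤ A * (m * (4*β*a*m)) := by
              apply mul_le_mul_of_nonneg_left _ hApos.le
              nlinarith [mul_le_mul_of_nonneg_left hE2 (show (0:ℝ) ≤ m by linarith),
                mul_nonneg ha.le (by linarith : (0:ℝ) ≤ 1 + E)]
          _ = 4*β*a*m^2 * A := by ring
      have hA2 : Real.exp (-π * (m-a)^2 * x) ≤ Real.exp (-(9/16) * β * m^2) := by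
        apply Real.exp_le_exp.mpr
        have h34 : (3/4) * m ≤ m - a := by nlinarith
        have h2 : (9/16) * m^2 ≤ (m-a)^2 := by nlinarith
        rw [hβ]; nlinarith
      have hgeo : 4*β*a*m^2 * Real.exp (-(9/16) * β * m^2) ≤ C * ρ^n := by
        have hm2 : m^2 = (n:ℝ)^2 + 2*(n:ℝ) + 1 := by rw [hm]; ring
        have hsplit : Real.exp (-(9/16) * β * m^2) =
            Real.exp (-(9/16) * β) * Real.exp (-(9/16) * β * ((n:ℝ)^2 + 2*(n:ℝ))) := by
          rw [← Real.exp_add]; congr 1; rw [hm2]; ring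
        have hb1 : Real.exp (-(9/16) * β * ((n:ℝ)^2 + 2*(n:ℝ))) ≤ Real.exp (-13 * (n:ℝ)) := by
          apply Real.exp_le_exp.mpr
          have hnn : (n:ℝ) ≤ (n:ℝ)^2 := by
            exact_mod_cast Nat.le_self_pow (by norm_num) n
          nlinarith [mul_le_mul_of_nonneg_right hβ8
            (show (0:ℝ) ≤ (n:ℝ)^2 + 2*(n:ℝ) by positivity)]
        have hpow : m^2 ≤ (4:ℝ)^n := by
          have h1 : (n:ℝ) + 1 ≤ (2:ℝ)^n := by
            have h2 := Nat.lt_two_pow_self (n := n)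
            have h3 : ((n+1 : ℕ):ℝ) ≤ ((2^n : ℕ):ℝ) := by exact_mod_cast h2
            push_cast at h3; linarith
          calc m^2 = ((n:ℝ)+1)^2 := by rw [hm]
            _ ≤ ((2:ℝ)^n)^2 := by nlinarith [pow_pos (show (0:ℝ) < 2 by norm_num) n]
            _ = (4:ℝ)^n := by
                rw [← pow_mul, mul_comm n 2, pow_mul]
                norm_num
        have hexp13 : Real.exp (-13 * (n:ℝ)) = (Real.exp (-13))^n := by
          rw [← Real.exp_nat_mul, mul_comm ((n:ℕ):ℝ) (-13)]
        calc 4*β*a*m^2 * Real.exp (-(9/16) * β * m^2)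
            = (4*β*a* Real.exp (-(9/16) * β)) *
              (m^2 * Real.exp (-(9/16) * β * ((n:ℝ)^2 + 2*(n:ℝ)))) := by
              rw [hsplit]; ring
          _ ≤ (4*β*a* Real.exp (-(9/16) * β)) * ((4:ℝ)^n * Real.exp (-13 * (n:ℝ))) := by
              apply mul_le_mul_of_nonneg_left _ (by positivity)
              exact mul_le_mul hpow hb1 (Real.exp_pos _).le (by positivity)
          _ = C * ρ^n := by
              rw [hC, hρ, hexp13, mul_pow]
              try ring
      have hfin : g (m - a) - g (m + a) ≤ C * ρ^n := by
        calc g (m - a) - g (m + a) ≤ 4*β*a*m^2 * Real.exp (-π * (m-a)^2 * x) := hgm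
          _ ≤ 4*β*a*m^2 * Real.exp (-(9/16) * β * m^2) := by
              apply mul_le_mul_of_nonneg_left hA2 (by positivity)
          _ ≤ C * ρ^n := hgeo
      have hmm : ((n:ℕ):ℝ) + 1 + a = m + a := by rw [hm]
      have hmm2 : ((n:ℕ):ℝ) + 1 - a = m - a := by rw [hm]
      rw [hmm, hmm2]
      linarith
    -- sum up
    have hsum_w := h3.summable
    have hsum_tail : Summable (fun n : ℕ => g (((n:ℕ):ℝ) + 1 + a) - g (((n:ℕ):ℝ) + 1 - a)) := by
      have h5 := (summable_nat_add_iff 1).mpr hsum_w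
      apply h5.congr
      intro n
      push_cast
      norm_num
    have hgeosum : HasSum (fun n : ℕ => -(C * ρ^n)) (-(C * (1-ρ)⁻¹)) := by
      have h6 := (hasSum_geometric_of_lt_one hρpos.le hρlt1).mul_left C
      exact h6.neg
    have hlow : -(C * (1-ρ)⁻¹) ≤ ∑' n : ℕ, (g (((n:ℕ):ℝ) + 1 + a) - g (((n:ℕ):ℝ) + 1 - a)) := by
      rw [← hgeosum.tsum_eq]
      exact Summable.tsum_le_tsum htail hgeosum.summable hsum_tail
    have hdecomp : K + g a = 2 * g a +
        ∑' n : ℕ, (g (((n:ℕ):ℝ) + 1 + a) - g (((n:ℕ):ℝ) + 1 - a)) := by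
      rw [← h3.tsum_eq, hsum_w.tsum_eq_zero_add]
      congr 1
      · simp only [Nat.cast_zero, zero_add, zero_sub, hgodd]
        ring
      · apply tsum_congr
        intro n
        push_cast
        norm_num
    -- numeric inequality : C * (1-ρ)⁻¹ < g a
    have hga : a * Real.exp (-(1:ℝ)/2) ≤ g a := by
      simp only [hg]
      apply mul_le_mul_of_nonneg_left _ ha.le
      apply Real.exp_le_exp.mpr
      nlinarith
    have hE4 : (53:ℝ) ≤ Real.exp 4 := by
      calc (53:ℝ) ≤ 2.7^4 := by norm_num
        _ ≤ (Real.exp 1)^4 := by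
            exact pow_le_pow_left₀ (by norm_num) (by have := Real.exp_one_gt_d9; linarith) 4
        _ = Real.exp 4 := by rw [← Real.exp_nat_mul]; norm_num
    have hstep : 4*β*(2048/2047) < Real.exp ((9/16)*β - 1/2) := by
      have h5 : Real.exp ((9/16)*β - 1/2) = Real.exp 4 * Real.exp ((9/16)*β - 9/2) := by
        rw [← Real.exp_add]; congr 1; ring
      have h6 : (9/16)*β - 7/2 ≤ Real.exp ((9/16)*β - 9/2) := by
        have := Real.add_one_le_exp ((9/16)*β - 9/2); linarith
      have h8 : (0:ℝ) ≤ (9/16)*β - 7/2 := by linarith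
      have h7 : 53 * ((9/16)*β - 7/2) ≤ Real.exp 4 * Real.exp ((9/16)*β - 9/2) := by
        nlinarith [Real.exp_pos ((9/16)*β - 9/2)]
      rw [h5]; nlinarith
    have hX : 4*β*Real.exp (-(9/16)*β) * (2048/2047) < Real.exp (-(1:ℝ)/2) := by
      have hXpos : (0:ℝ) < Real.exp (-(9/16)*β) := Real.exp_pos _
      have h9 := mul_lt_mul_of_pos_right hstep hXpos
      have hcomb : Real.exp ((9/16)*β - 1/2) * Real.exp (-(9/16)*β) = Real.exp (-(1:ℝ)/2) := by
        rw [← Real.exp_add]; congr 1; ring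
      rw [hcomb] at h9
      nlinarith
    have hinv : (1-ρ)⁻¹ ≤ 2048/2047 := by
      have h10 : (2047:ℝ)/2048 ≤ 1 - ρ := by linarith
      have h11 := inv_anti₀ (show (0:ℝ) < 2047/2048 by norm_num) h10
      calc (1-ρ)⁻¹ ≤ ((2047:ℝ)/2048)⁻¹ := h11
        _ = 2048/2047 := by norm_num
    have hnum : C * (1-ρ)⁻¹ < a * Real.exp (-(1:ℝ)/2) := by
      have hCform : C * (1-ρ)⁻¹ = a * (4*β*Real.exp (-(9/16)*β) * (1-ρ)⁻¹) := by
        rw [hC]; ring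
      have hfinal : 4*β*Real.exp (-(9/16)*β) * (1-ρ)⁻¹ < Real.exp (-(1:ℝ)/2) := by
        have h0' : (0:ℝ) ≤ 4*β*Real.exp (-(9/16)*β) := by positivity
        have h12 := mul_le_mul_of_nonneg_left hinv h0'
        calc 4*β*Real.exp (-(9/16)*β) * (1-ρ)⁻¹
            ≤ 4*β*Real.exp (-(9/16)*β) * (2048/2047) := h12
          _ < Real.exp (-(1:ℝ)/2) := hX
      rw [hCform]
      exact mul_lt_mul_of_pos_left hfinal ha
    linarith
/-- For every `ξ ∈ (0,1)` and every `s > 0`,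
`Σₙ₌₁^∞ n e^{−n²π²s} sin(nπξ) > 0` (positivity of the left boundary heat flux of the
Dirichlet heat solution started from the Dirac measure `δ_ξ`). -/
theorem dirac_boundary_flux_pos
    (ξ : ℝ) (hξ : ξ ∈ Ioo (0:ℝ) 1) (s : ℝ) (hs : 0 < s) :
    0 < ∑' n : ℕ+, (n : ℝ) * Real.exp (-(n : ℝ) ^ 2 * π ^ 2 * s) * Real.sin (n * π * ξ) := by
  obtain ⟨hξ0, hξ1⟩ := hξ
  have hπ := Real.pi_pos
  have hπ3 := Real.pi_gt_three
  have hπs : 0 < π * s := by positivity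
  set F : ℕ → ℝ :=
    fun n => (n : ℝ) * Real.exp (-(n:ℝ)^2 * π^2 * s) * Real.sin ((n:ℝ) * π * ξ) with hF
  set L : ℝ := HurwitzZeta.sinKernel (↑(ξ/2)) (π*s) / 2 with hL
  -- the series sums to `L`
  have hLsum : HasSum F L := by
    have hker := HurwitzZeta.hasSum_nat_sinKernel (ξ/2) hπs
    apply (hker.div_const 2).congr_fun
    intro n
    rw [hF]
    rw [show 2*π*(ξ/2)*(n:ℝ) = (n:ℝ)*π*ξ by ring,
      show -π*(n:ℝ)^2*(π*s) = -(n:ℝ)^2*π^2*s by ring]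
    ring
  have hsin : 0 < Real.sin (π * ξ) := by
    apply Real.sin_pos_of_pos_of_lt_pi (by positivity)
    nlinarith
  -- positivity of `L`
  have hLpos : 0 < L := by
    rcases le_total s (1/8) with hcase | hcase
    · -- small s : via the functional equation and the Gaussian-side sum
      set x : ℝ := (π*s)⁻¹ with hxdef
      have hxpos : 0 < x := by positivity
      have hx8 : 8 ≤ π * x := by
        have h1 : π * x = s⁻¹ := by
          rw [hxdef, mul_inv]
          rw [← mul_assoc, mul_inv_cancel₀ (ne_of_gt hπ), one_mul]
        rw [h1]
        have h2 := inv_anti₀ hs hcase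
        norm_num at h2
        linarith
      have hodd := aux_oddKernel_pos (ξ/2) x (by linarith) (by linarith) hx8
      have hfe := HurwitzZeta.oddKernel_functional_equation (↑(ξ/2)) x
      have h1x : 1/x = π*s := by rw [hxdef, one_div, inv_inv]
      rw [hfe, h1x] at hodd
      have hfac : 0 < 1/x^((3:ℝ)/2) := by positivity
      have hker : 0 < HurwitzZeta.sinKernel (↑(ξ/2)) (π*s) := by
        by_contra hle
        push_neg at hle
        nlinarith
      rw [hL]
      linarith
    · -- large s : the first term dominates
      have hq0 : (0:ℝ) < Real.exp (-(π^2*s)) := Real.exp_pos _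
      set r : ℝ := 4 * Real.exp (-(3*(π^2*s))) with hrdef
      have hr0 : 0 < r := by positivity
      have hexp1 : (2:ℝ) ≤ Real.exp 1 := by have := Real.exp_one_gt_d9; linarith
      have hrle : r ≤ 1/4 := by
        have h1 : Real.exp (-(3*(π^2*s))) ≤ Real.exp (-3) := by
          apply Real.exp_le_exp.mpr
          nlinarith
        have hex3 : (16:ℝ) ≤ Real.exp 3 := by
          have he3 : Real.exp 3 = Real.exp 1 * Real.exp 1 * Real.exp 1 := by
            rw [← Real.exp_add, ← Real.exp_add]; norm_num
          have h27 : (2.7:ℝ) ≤ Real.exp 1 := by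
            have := Real.exp_one_gt_d9; linarith
          have hsq : (7.29:ℝ) ≤ Real.exp 1 * Real.exp 1 := by nlinarith
          nlinarith
        have h2 : Real.exp (-3) ≤ 1/16 := by
          rw [Real.exp_neg, inv_le_comm₀ (Real.exp_pos 3) (by norm_num)]
          linarith
        rw [hrdef]; linarith
      have hr1 : r < 1 := by linarith
      set c : ℝ := Real.sin (π*ξ) * Real.exp (-(π^2*s)) with hc
      have hcpos : 0 < c := by positivity
      -- the head term
      have hF1 : F 1 = c := by
        rw [hF, hc]
        norm_num
        rw [show -(π^2*s) = -(1:ℝ)^2*π^2*s by ring]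
        ring
      -- tail bound
      have hbound : ∀ n : ℕ, |F (n+2)| ≤ c * r^(n+1) := by
        intro n
        have hn0 : (0:ℝ) ≤ (n:ℝ) := Nat.cast_nonneg n
        set m : ℕ := n + 2 with hmdef
        have hm : ((m:ℕ):ℝ) = (n:ℝ) + 2 := by rw [hmdef]; push_cast; ring
        have habs : |F m| = (m:ℝ) * Real.exp (-(m:ℝ)^2*π^2*s) * |Real.sin ((m:ℝ)*π*ξ)| := by
          rw [hF, abs_mul, abs_mul, abs_of_nonneg (by positivity : (0:ℝ) ≤ (m:ℝ)),
            abs_of_nonneg (Real.exp_pos _).le]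
        have hsinb : |Real.sin ((m:ℝ)*π*ξ)| ≤ (m:ℝ) * Real.sin (π*ξ) := by
          have := aux_sin_nat_mul_le (π*ξ) m
          rw [abs_of_pos hsin] at this
          rw [show (m:ℝ)*π*ξ = (m:ℝ)*(π*ξ) by ring]
          exact this
        have hexpb : Real.exp (-(m:ℝ)^2*π^2*s) ≤
            Real.exp (-(π^2*s)) * (Real.exp (-(3*(π^2*s))))^(n+1) := by
          rw [← Real.exp_nat_mul, ← Real.exp_add]
          apply Real.exp_le_exp.mpr
          rw [hm]
          push_cast
          have hkey : (3*(n:ℝ)+4) * (π^2*s) ≤ (((n:ℝ)+2)^2) * (π^2*s) := by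
            apply mul_le_mul_of_nonneg_right _ (by positivity)
            nlinarith [sq_nonneg ((n:ℝ))]
          nlinarith [hkey]
        have hmb : ((m:ℕ):ℝ) ≤ (2:ℝ)^(n+1) := by
          have h2 := Nat.lt_two_pow_self (n := n+1)
          have h3 : ((n+2 : ℕ):ℝ) ≤ ((2^(n+1) : ℕ):ℝ) := by exact_mod_cast h2
          push_cast at h3
          rw [hm]; push_cast; linarith
        calc |F m| = (m:ℝ) * Real.exp (-(m:ℝ)^2*π^2*s) * |Real.sin ((m:ℝ)*π*ξ)| := habs
          _ ≤ (m:ℝ) * Real.exp (-(m:ℝ)^2*π^2*s) * ((m:ℝ) * Real.sin (π*ξ)) := by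
              apply mul_le_mul_of_nonneg_left hsinb (by positivity)
          _ = ((m:ℝ) * (m:ℝ)) * Real.sin (π*ξ) * Real.exp (-(m:ℝ)^2*π^2*s) := by ring
          _ ≤ ((2:ℝ)^(n+1) * (2:ℝ)^(n+1)) * Real.sin (π*ξ) *
              (Real.exp (-(π^2*s)) * (Real.exp (-(3*(π^2*s))))^(n+1)) := by
              apply mul_le_mul
              · apply mul_le_mul_of_nonneg_right _ hsin.le
                apply mul_le_mul hmb hmb (by positivity) (by positivity)
              · exact hexpb
              · positivity
              · positivity
          _ = c * r^(n+1) := by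
              rw [hc, hrdef, mul_pow]
              rw [show ((4:ℝ))^(n+1) = (2^(n+1) : ℝ) * 2^(n+1) by
                rw [← mul_pow]; norm_num]
              ring
      -- assemble
      have hsum0 : Summable F := hLsum.summable
      have hsum1 : Summable (fun n : ℕ => F (n+1)) := (summable_nat_add_iff 1).mpr hsum0
      have hsum2 : Summable (fun n : ℕ => F (n+2)) := (summable_nat_add_iff 2).mpr hsum0
      have hgeo : HasSum (fun n : ℕ => -(c * r^(n+1))) (-(c * r * (1-r)⁻¹)) := by
        have h5 := (hasSum_geometric_of_lt_one hr0.le hr1).mul_left (c*r)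
        have h6 : HasSum (fun n : ℕ => c * r^(n+1)) (c * r * (1-r)⁻¹) := by
          apply h5.congr_fun
          intro n
          rw [pow_succ]
          ring
        exact h6.neg
      have htailge : -(c * r * (1-r)⁻¹) ≤ ∑' n : ℕ, F (n+2) := by
        rw [← hgeo.tsum_eq]
        apply Summable.tsum_le_tsum _ hgeo.summable hsum2
        intro n
        have := hbound n
        have h7 := neg_abs_le (F (n+2))
        linarith
      have hdec1 : L = F 0 + ∑' n : ℕ, F (n+1) := by
        rw [← hLsum.tsum_eq]
        exact hsum0.tsum_eq_zero_add
      have hdec2 : (∑' n : ℕ, F (n+1)) = F 1 + ∑' n : ℕ, F (n+2) := by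
        rw [hsum1.tsum_eq_zero_add]
        try norm_num
      have hF0 : F 0 = 0 := by rw [hF]; norm_num
      have hrr : r * (1-r)⁻¹ ≤ 1/3 := by
        have h8 : (3:ℝ)/4 ≤ 1 - r := by linarith
        have h9 := inv_anti₀ (show (0:ℝ) < 3/4 by norm_num) h8
        have h10 : (1-r)⁻¹ ≤ 4/3 := by
          calc (1-r)⁻¹ ≤ ((3:ℝ)/4)⁻¹ := h9
            _ = 4/3 := by norm_num
        calc r * (1-r)⁻¹ ≤ (1/4) * (4/3) := by
              apply mul_le_mul hrle h10 (by positivity) (by norm_num)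
          _ = 1/3 := by norm_num
        -- end
      have hrr2 : -(c * r * (1-r)⁻¹) ≥ -(c * (1/3)) := by
        have : c * (r * (1-r)⁻¹) ≤ c * (1/3) :=
          mul_le_mul_of_nonneg_left hrr hcpos.le
        have he : c * r * (1-r)⁻¹ = c * (r * (1-r)⁻¹) := by ring
        rw [he]
        linarith
      rw [hdec1, hdec2, hF0, hF1]
      have := htailge
      linarith
  -- transfer from `ℕ` to `ℕ+`
  have hinj : Function.Injective ((↑) : ℕ+ → ℕ) := fun a b h => PNat.coe_injective h
  have hzero : ∀ n : ℕ, n ∉ Set.range ((↑) : ℕ+ → ℕ) → F n = 0 := by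
    intro n hn
    have hn0 : n = 0 := by
      by_contra h0
      exact hn ⟨⟨n, Nat.pos_of_ne_zero h0⟩, rfl⟩
    rw [hn0, hF]
    norm_num
  have hP : HasSum (fun n : ℕ+ => F (n : ℕ)) L :=
    (Function.Injective.hasSum_iff hinj hzero).mpr hLsum
  have heq := hP.tsum_eq
  calc (0:ℝ) < L := hLpos
    _ = ∑' n : ℕ+, F (n : ℕ) := heq.symm
    _ = ∑' n : ℕ+, (n : ℝ) * Real.exp (-(n : ℝ) ^ 2 * π ^ 2 * s) * Real.sin (n * π * ξ) := by
        apply tsum_congr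
        intro n
        rw [hF]
        try norm_num
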